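/- For the continuous-time quantum walk on the n-cube, the Fourier transform of the probability distribution at time t satisfies P̃_t(k) = cos^{|k|}(2t/n), where |k| is the Hamming weight of the frequency vector k. -/

import Mathlib

/-- For the continuous-time quantum walk on the `n`-cube, the Fourier transform of the
probability distribution at time `t` is `P̃_t(k) = cos^{|k|}(2t/n)`, where `|k|` is the
Hamming weight of the frequency vector `k`. -/
theorem hypercube_walk_fourier_prob (n : ℕ) (hn : 1 ≤ n) (t : ℝ)
    (P : (Fin n → ZMod 2) → ℝ)
    (hP : ∀ x, P x =
      ‖(Real.cos (t / n) : ℂ) ^ (n - (Finset.univ.filter fun i => x i = 1).card) *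
        (Complex.I * Real.sin (t / n)) ^ (Finset.univ.filter fun i => x i = 1).card‖ ^ 2)
    (k : Fin n → ZMod 2) :
    ∑ x : Fin n → ZMod 2,
        (-1 : ℝ) ^ (Finset.univ.filter fun i => k i = 1 ∧ x i = 1).card * P x =
      Real.cos (2 * t / n) ^ (Finset.univ.filter fun i => k i = 1).card := by
  set c := Real.cos (t / n) with hc
  set s := Real.sin (t / n) with hs
  have hsum2 : ∀ f : ZMod 2 → ℝ, ∑ a : ZMod 2, f a = f 0 + f 1 := by
    intro f
    exact Fin.sum_univ_two f
  have hPx : ∀ x : Fin n → ZMod 2,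
      P x = ∏ i, (if x i = 1 then s ^ 2 else c ^ 2) := by
    intro x
    rw [hP, norm_mul, norm_pow, norm_pow, norm_mul, Complex.norm_I,
      Complex.norm_real, Complex.norm_real, Real.norm_eq_abs, Real.norm_eq_abs, one_mul, mul_pow, ← pow_mul, ← pow_mul,
      mul_comm _ 2, mul_comm _ 2, pow_mul, pow_mul, sq_abs, sq_abs,
      Finset.prod_ite, Finset.prod_const, Finset.prod_const]
    have h := Finset.card_filter_add_card_filter_not (s := (Finset.univ : Finset (Fin n)))
      (p := fun i => x i = 1)
    simp only [Finset.card_univ, Fintype.card_fin] at h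
    rw [mul_comm]
    congr 2
    omega
  calc ∑ x : Fin n → ZMod 2,
        (-1 : ℝ) ^ (Finset.univ.filter fun i => k i = 1 ∧ x i = 1).card * P x
      = ∑ x : Fin n → ZMod 2, ∏ i,
          ((if k i = 1 ∧ x i = 1 then (-1 : ℝ) else 1) *
            (if x i = 1 then s ^ 2 else c ^ 2)) := by
        refine Finset.sum_congr rfl fun x _ => ?_
        have hsgn : ∏ i, (if k i = 1 ∧ x i = 1 then (-1 : ℝ) else 1) =
            (-1 : ℝ) ^ (Finset.univ.filter fun i => k i = 1 ∧ x i = 1).card := by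
          rw [Finset.prod_ite, Finset.prod_const, Finset.prod_const, one_pow, mul_one]
        rw [hPx, Finset.prod_mul_distrib, hsgn]
    _ = ∏ i, ∑ a : ZMod 2,
          ((if k i = 1 ∧ a = 1 then (-1 : ℝ) else 1) *
            (if a = 1 then s ^ 2 else c ^ 2)) := by
        rw [Finset.prod_univ_sum]
        exact Finset.sum_congr (by simp) fun x _ => rfl
    _ = ∏ i, (if k i = 1 then Real.cos (2 * t / n) else 1) := by
        refine Finset.prod_congr rfl fun i _ => ?_
        rw [hsum2]
        have h01 : (0 : ZMod 2) ≠ 1 := by decide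
        have hcs : c ^ 2 - s ^ 2 = Real.cos (2 * (t / n)) := by
          rw [hc, hs, Real.cos_two_mul, Real.sin_sq]; ring
        by_cases hk : k i = 1
        · rw [if_pos hk]
          simp only [hk, true_and]
          simp only [if_true, if_neg h01]
          rw [mul_div_assoc, ← hcs]
          ring
        · rw [if_neg hk]
          simp only [hk, false_and, if_false]
          simp only [if_true, if_neg h01, one_mul]
          rw [hc, hs]
          exact Real.cos_sq_add_sin_sq _
    _ = Real.cos (2 * t / n) ^ (Finset.univ.filter fun i => k i = 1).card := by
        rw [Finset.prod_ite, Finset.prod_const, Finset.prod_const, one_pow, mul_one]
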